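/- Let f be a convex continuous real-valued function on an interval I ⊆ ℝ, and let a, x₀, x, b ∈ I with a < x₀ < x < b. Then for every ε > 0 there exists a partition x₀ < x₁ < … < xₙ = x such that f'(xⱼ−) − f'(x_{j−1}+) < ε for j = 1, …, n, where f'(z−) and f'(z+) denote the left and right derivatives of f at z. -/

import Mathlib

set_option synthInstance.maxHeartbeats 400000
set_option maxHeartbeats 800000

open Set Filter Topology

namespace Stmt5Aux


variable {I : Set ℝ} {f : ℝ → ℝ}

lemma mem_of_Ioo (hf : ConvexOn ℝ I f) {p q u : ℝ} (hp : p ∈ I) (hq : q ∈ I)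
    (hu : u ∈ Ioo p q) : u ∈ I :=
  hf.1.ordConnected.out hp hq (Ioo_subset_Icc_self hu)

lemma left_tendsto (hf : ConvexOn ℝ I f) {p z q : ℝ} (hp : p ∈ I) (hz : z ∈ I) (hq : q ∈ I)
    (hpz : p < z) (hzq : z < q) :
    Tendsto (slope f z) (𝓝[<] z) (𝓝 (derivWithin f (Iio z) z)) := by
  set m := (p + z) / 2 with hm
  have hpm : p < m := by rw [hm]; linarith
  have hmz : m < z := by rw [hm]; linarith
  set g : ℝ → ℝ := fun u => slope f z (max u m) with hg
  have hmemI : ∀ u, u < z → max u m ∈ I \ {z} := by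
    intro u hu
    have h1 : max u m ∈ Ioo p z := ⟨lt_max_of_lt_right hpm, max_lt hu hmz⟩
    exact ⟨mem_of_Ioo hf hp hz h1, ne_of_lt h1.2⟩
  have hmono : MonotoneOn g (Iio z) := fun u hu v hv huv =>
    hf.slope_mono hz (hmemI u hu) (hmemI v hv) (max_le_max huv le_rfl)
  have hbdd : BddAbove (g '' Iio z) := by
    refine ⟨slope f z q, ?_⟩
    rintro _ ⟨u, hu, rfl⟩
    exact hf.slope_mono hz (hmemI u hu) ⟨hq, ne_of_gt hzq⟩
      (((max_lt hu hmz).trans hzq).le)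
  have hT : Tendsto g (𝓝[<] z) (𝓝 (sSup (g '' Iio z))) :=
    hmono.tendsto_nhdsLT hbdd
  have heq : slope f z =ᶠ[𝓝[<] z] g := by
    filter_upwards [Ioo_mem_nhdsLT hmz] with u hu
    simp only [hg, max_eq_left hu.1.le]
  have hT' : Tendsto (slope f z) (𝓝[<] z) (𝓝 (sSup (g '' Iio z))) := hT.congr' heq.symm
  have hd : HasDerivWithinAt f (sSup (g '' Iio z)) (Iio z) z :=
    (hasDerivWithinAt_iff_tendsto_slope' notMem_Iio_self).2 hT'
  rw [hd.derivWithin (uniqueDiffWithinAt_Iio z)]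
  exact hT'

lemma right_tendsto (hf : ConvexOn ℝ I f) {p z q : ℝ} (hp : p ∈ I) (hz : z ∈ I) (hq : q ∈ I)
    (hpz : p < z) (hzq : z < q) :
    Tendsto (slope f z) (𝓝[>] z) (𝓝 (derivWithin f (Ioi z) z)) := by
  set m := (z + q) / 2 with hm
  have hzm : z < m := by rw [hm]; linarith
  have hmq : m < q := by rw [hm]; linarith
  set g : ℝ → ℝ := fun u => slope f z (min u m) with hg
  have hmemI : ∀ u, z < u → min u m ∈ I \ {z} := by
    intro u hu
    have h1 : min u m ∈ Ioo z q := ⟨lt_min hu hzm, min_lt_of_right_lt hmq⟩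
    exact ⟨mem_of_Ioo hf hz hq h1, ne_of_gt h1.1⟩
  have hmono : MonotoneOn g (Ioi z) := fun u hu v hv huv =>
    hf.slope_mono hz (hmemI u hu) (hmemI v hv) (min_le_min huv le_rfl)
  have hbdd : BddBelow (g '' Ioi z) := by
    refine ⟨slope f z p, ?_⟩
    rintro _ ⟨u, hu, rfl⟩
    exact hf.slope_mono hz ⟨hp, ne_of_lt hpz⟩ (hmemI u hu)
      ((hpz.trans (lt_min hu hzm)).le)
  have hT : Tendsto g (𝓝[>] z) (𝓝 (sInf (g '' Ioi z))) :=
    hmono.tendsto_nhdsGT hbdd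
  have heq : slope f z =ᶠ[𝓝[>] z] g := by
    filter_upwards [Ioo_mem_nhdsGT hzm] with u hu
    simp only [hg, min_eq_left hu.2.le]
  have hT' : Tendsto (slope f z) (𝓝[>] z) (𝓝 (sInf (g '' Ioi z))) := hT.congr' heq.symm
  have hd : HasDerivWithinAt f (sInf (g '' Ioi z)) (Ioi z) z :=
    (hasDerivWithinAt_iff_tendsto_slope' notMem_Ioi_self).2 hT'
  rw [hd.derivWithin (uniqueDiffWithinAt_Ioi z)]
  exact hT'

/-- Left derivative is at most the slope to a point on the right. -/
lemma leftDeriv_le_slope (hf : ConvexOn ℝ I f) {p z v : ℝ} (hp : p ∈ I) (hz : z ∈ I)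
    (hv : v ∈ I) (hpz : p < z) (hzv : z < v) :
    derivWithin f (Iio z) z ≤ slope f z v := by
  refine le_of_tendsto (left_tendsto hf hp hz hv hpz hzv) ?_
  filter_upwards [Ioo_mem_nhdsLT hpz] with u hu
  exact hf.slope_mono hz ⟨mem_of_Ioo hf hp hz hu, ne_of_lt hu.2⟩ ⟨hv, ne_of_gt hzv⟩
    ((hu.2.trans hzv).le)

/-- Slope from a point on the left is at most the right derivative. -/
lemma slope_le_rightDeriv (hf : ConvexOn ℝ I f) {u z q : ℝ} (hu : u ∈ I) (hz : z ∈ I)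
    (hq : q ∈ I) (huz : u < z) (hzq : z < q) :
    slope f z u ≤ derivWithin f (Ioi z) z := by
  refine ge_of_tendsto (right_tendsto hf hu hz hq huz hzq) ?_
  filter_upwards [Ioo_mem_nhdsGT hzq] with t ht
  exact hf.slope_mono hz ⟨hu, ne_of_lt huz⟩ ⟨mem_of_Ioo hf hz hq ht, ne_of_gt ht.1⟩
    ((huz.trans ht.1).le)


variable {I : Set ℝ} {f : ℝ → ℝ}


/-- Approaching `z` from the left: right derivatives at nearby points on the left
are close to (at most `ε` below) the left derivative at `z`. -/
lemma approach_left (hf : ConvexOn ℝ I f) (hfc : ContinuousOn f I) {c z q : ℝ}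
    (hc : c ∈ I) (hz : z ∈ I) (hq : q ∈ I) (hcz : c < z) (hzq : z < q)
    {ε : ℝ} (hε : 0 < ε) :
    ∃ w ∈ Ioo c z, ∀ u ∈ Ioo w z,
      derivWithin f (Iio z) z - derivWithin f (Ioi u) u < ε := by
  set L := derivWithin f (Iio z) z with hL
  have h1 : ∀ᶠ u in 𝓝[<] z, L - ε / 2 < slope f z u :=
    (left_tendsto hf hc hz hq hcz hzq).eventually (eventually_gt_nhds (by linarith))
  have h2 : ∀ᶠ u in 𝓝[<] z, u ∈ Ioo c z := Ioo_mem_nhdsLT hcz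
  obtain ⟨w, hwslope, hwmem⟩ := (h1.and h2).exists
  have hwI : w ∈ I := mem_of_Ioo hf hc hz hwmem
  -- continuity of slope
  have hsub : Ioo w z ⊆ I := fun t ht => mem_of_Ioo hf hwI hz ht
  have hfz : ContinuousWithinAt f (Ioo w z) z := (hfc z hz).mono hsub
  have key : Tendsto (fun u => slope f w u) (𝓝[Ioo w z] z) (𝓝 (slope f w z)) := by
    simp only [slope_def_field]
    exact (hfz.sub tendsto_const_nhds).div
      ((tendsto_id.mono_left nhdsWithin_le_nhds).sub tendsto_const_nhds)
      (sub_ne_zero_of_ne (ne_of_gt hwmem.2))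
  have heqn : 𝓝[Ioo w z] z = 𝓝[<] z := by
    rw [nhdsWithin_restrict'' (Iio z) (Ioo_mem_nhdsLT hwmem.2),
      inter_eq_self_of_subset_right Ioo_subset_Iio_self]
  have h3 : ∀ᶠ u in 𝓝[<] z, slope f w z - ε / 2 < slope f w u := by
    rw [← heqn]
    exact key.eventually (eventually_gt_nhds (by linarith))
  have h4 := (h3.and h2).and (eventually_mem_nhdsWithin (s := Iio z))
  rw [eventually_iff, mem_nhdsLT_iff_exists_Ioo_subset] at h4
  obtain ⟨w', hw'z, hw'sub⟩ := h4
  refine ⟨max w' w, ⟨lt_max_of_lt_right hwmem.1, max_lt hw'z hwmem.2⟩, ?_⟩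
  intro u hu
  · have hu' : u ∈ Ioo w' z := ⟨(le_max_left w' w).trans_lt hu.1, hu.2⟩
    obtain ⟨⟨hslope2, humem⟩, _⟩ := hw'sub hu'
    have huI : u ∈ I := mem_of_Ioo hf hwI hz ⟨(le_max_right w' w).trans_lt hu.1, hu.2⟩
    have hwu : w < u := (le_max_right w' w).trans_lt hu.1
    have h5 : slope f u w ≤ derivWithin f (Ioi u) u :=
      slope_le_rightDeriv hf hwI huI hz hwu hu.2
    rw [slope_comm] at h5
    rw [slope_comm f z w] at hwslope
    linarith


variable {I : Set ℝ} {f : ℝ → ℝ}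

/-- Approaching `z` from the right: left derivatives at nearby points on the right
are close to (at most `ε` above) the right derivative at `z`. -/
lemma approach_right (hf : ConvexOn ℝ I f) (hfc : ContinuousOn f I) {p z d : ℝ}
    (hp : p ∈ I) (hz : z ∈ I) (hd : d ∈ I) (hpz : p < z) (hzd : z < d)
    {ε : ℝ} (hε : 0 < ε) :
    ∃ w ∈ Ioo z d, ∀ t ∈ Ioc z w,
      derivWithin f (Iio t) t - derivWithin f (Ioi z) z < ε := by
  set R := derivWithin f (Ioi z) z with hR
  have h1 : ∀ᶠ v in 𝓝[>] z, slope f z v < R + ε / 2 :=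
    (right_tendsto hf hp hz hd hpz hzd).eventually (eventually_lt_nhds (by linarith))
  have h2 : ∀ᶠ v in 𝓝[>] z, v ∈ Ioo z d := Ioo_mem_nhdsGT hzd
  obtain ⟨v, hvslope, hvmem⟩ := (h1.and h2).exists
  have hvI : v ∈ I := mem_of_Ioo hf hz hd hvmem
  have hsub : Ioo z v ⊆ I := fun t ht => mem_of_Ioo hf hz hvI ht
  have hfz : ContinuousWithinAt f (Ioo z v) z := (hfc z hz).mono hsub
  have key : Tendsto (fun t => slope f v t) (𝓝[Ioo z v] z) (𝓝 (slope f v z)) := by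
    simp only [slope_def_field]
    exact (hfz.sub tendsto_const_nhds).div
      ((tendsto_id.mono_left nhdsWithin_le_nhds).sub tendsto_const_nhds)
      (sub_ne_zero_of_ne (ne_of_lt hvmem.1))
  have heqn : 𝓝[Ioo z v] z = 𝓝[>] z := by
    rw [nhdsWithin_restrict'' (Ioi z) (Ioo_mem_nhdsGT hvmem.1),
      inter_eq_self_of_subset_right Ioo_subset_Ioi_self]
  have h3 : ∀ᶠ t in 𝓝[>] z, slope f v t < slope f v z + ε / 2 := by
    rw [← heqn]
    exact key.eventually (eventually_lt_nhds (by linarith))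
  have h4 := h3.and h2
  rw [eventually_iff, mem_nhdsGT_iff_exists_Ioo_subset] at h4
  obtain ⟨w', hw'z, hw'sub⟩ := h4
  set w : ℝ := (z + min w' v) / 2 with hw
  have hzw' : z < min w' v := lt_min hw'z hvmem.1
  have hzw : z < w := by rw [hw]; linarith
  have hwlt : w < min w' v := by rw [hw]; linarith
  refine ⟨w, ⟨hzw, lt_of_lt_of_le hwlt ((min_le_right _ _).trans hvmem.2.le)⟩, ?_⟩
  intro t ht
  have ht' : t ∈ Ioo z w' := ⟨ht.1, lt_of_le_of_lt ht.2 (hwlt.trans_le (min_le_left _ _))⟩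
  obtain ⟨hslope2, htmem⟩ := hw'sub ht'
  have htv : t < v := lt_of_le_of_lt ht.2 (hwlt.trans_le (min_le_right _ _))
  have htI : t ∈ I := mem_of_Ioo hf hz hvI ⟨ht.1, htv⟩
  have h5 : derivWithin f (Iio t) t ≤ slope f t v :=
    leftDeriv_le_slope hf hz htI hvI ht.1 htv
  rw [slope_comm] at h5
  rw [slope_comm f z v] at hvslope
  linarith

/-- An `ε`-fine partition from `x₀` to `t`. -/
def IsPart (f : ℝ → ℝ) (ε x₀ t : ℝ) : Prop :=
  ∃ (n : ℕ) (xs : Fin (n + 1) → ℝ), StrictMono xs ∧ xs 0 = x₀ ∧ xs (Fin.last n) = t ∧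
    ∀ j : Fin n,
      derivWithin f (Iio (xs j.succ)) (xs j.succ)
        - derivWithin f (Ioi (xs j.castSucc)) (xs j.castSucc) < ε

lemma IsPart.refl (f : ℝ → ℝ) (ε x₀ : ℝ) : IsPart f ε x₀ x₀ :=
  ⟨0, fun _ => x₀, fun i j hij => absurd (Fin.le_of_lt hij) (by omega), rfl, rfl,
    fun j => j.elim0⟩

lemma IsPart.extend {ε x₀ u v : ℝ} (h : IsPart f ε x₀ u) (huv : u < v)
    (hd : derivWithin f (Iio v) v - derivWithin f (Ioi u) u < ε) : IsPart f ε x₀ v := by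
  obtain ⟨n, xs, hmono, h0, hlast, hj⟩ := h
  refine ⟨n + 1, Fin.snoc xs v, ?_, ?_, ?_, ?_⟩
  · rw [Fin.strictMono_iff_lt_succ]
    intro i
    refine Fin.lastCases ?_ (fun j => ?_) i
    · rw [Fin.succ_last, Fin.snoc_last, Fin.snoc_castSucc, hlast]
      exact huv
    · rw [Fin.succ_castSucc, Fin.snoc_castSucc, Fin.snoc_castSucc]
      exact hmono ((Fin.castSucc_lt_succ (i := j)))
  · rw [← Fin.castSucc_zero, Fin.snoc_castSucc]
    exact h0
  · exact Fin.snoc_last _ _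
  · intro j
    refine Fin.lastCases ?_ (fun i => ?_) j
    · rw [Fin.succ_last, Fin.snoc_last, Fin.snoc_castSucc, hlast]
      exact hd
    · rw [Fin.succ_castSucc, Fin.snoc_castSucc, Fin.snoc_castSucc]
      exact hj i

end Stmt5Aux

open Stmt5Aux

/-- **Lemma 2.3.** Let `f` be a convex continuous function on an interval `I` and let
`a < x₀ < x < b` with `a, x₀, x, b ∈ I`.  For every `ε > 0` there is a partition
`x₀ < x₁ < … < xₙ = x` such that `f'(xⱼ−) − f'(x_{j−1}+) < ε` for `j = 1, …, n`.
Here `f'(z−) = derivWithin f (Iio z) z` and `f'(z+) = derivWithin f (Ioi z) z` are the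
one-sided derivatives. -/
theorem stmt_5 (I : Set ℝ) (hI : I.OrdConnected)
    (f : ℝ → ℝ) (hf : ConvexOn ℝ I f) (hfc : ContinuousOn f I)
    (a x₀ x b : ℝ) (ha : a ∈ I) (hx₀ : x₀ ∈ I) (hx : x ∈ I) (hb : b ∈ I)
    (hax₀ : a < x₀) (hx₀x : x₀ < x) (hxb : x < b)
    (ε : ℝ) (hε : 0 < ε) :
    ∃ (n : ℕ) (xs : Fin (n + 1) → ℝ), StrictMono xs ∧ xs 0 = x₀ ∧ xs (Fin.last n) = x ∧
      ∀ j : Fin n,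
        derivWithin f (Set.Iio (xs j.succ)) (xs j.succ)
          - derivWithin f (Set.Ioi (xs j.castSucc)) (xs j.castSucc) < ε := by
  have hIcc : Icc a b ⊆ I := hI.out ha hb
  have hmemI : ∀ u : ℝ, a ≤ u → u ≤ b → u ∈ I := fun u h1 h2 => hIcc ⟨h1, h2⟩
  set S : Set ℝ := {t | t ∈ Ioc x₀ x ∧ IsPart f ε x₀ t} with hS
  -- S is nonempty
  obtain ⟨w₀, hw₀, hP₀⟩ := approach_right hf hfc ha hx₀ hx hax₀ hx₀x hε
  have hw₀S : w₀ ∈ S := ⟨⟨hw₀.1, hw₀.2.le⟩,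
    (IsPart.refl f ε x₀).extend hw₀.1 (hP₀ w₀ ⟨hw₀.1, le_rfl⟩)⟩
  have hne : S.Nonempty := ⟨w₀, hw₀S⟩
  have hbdd : BddAbove S := ⟨x, fun t ht => ht.1.2⟩
  set m := sSup S with hm
  have hx₀m : x₀ < m := lt_of_lt_of_le hw₀.1 (le_csSup hbdd hw₀S)
  have hmx : m ≤ x := csSup_le hne (fun t ht => ht.1.2)
  have hmI : m ∈ I := hmemI m (by linarith) (by linarith)
  -- m ∈ S
  have hPm : IsPart f ε x₀ m := by
    obtain ⟨w₁, hw₁, hL⟩ := approach_left hf hfc hx₀ hmI hb hx₀m (by linarith) hε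
    obtain ⟨u, huS, hw₁u⟩ := exists_lt_of_lt_csSup hne hw₁.2
    have hum : u ≤ m := le_csSup hbdd huS
    rcases eq_or_lt_of_le hum with h | h
    · exact h ▸ huS.2
    · exact huS.2.extend h (hL u ⟨hw₁u, h⟩)
  -- m = x
  have hmx' : m = x := by
    by_contra hne'
    have hmltx : m < x := lt_of_le_of_ne hmx hne'
    obtain ⟨w₂, hw₂, hR⟩ := approach_right hf hfc ha hmI hx (by linarith) hmltx hε
    have hw₂S : w₂ ∈ S := ⟨⟨hx₀m.trans hw₂.1, hw₂.2.le⟩,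
      hPm.extend hw₂.1 (hR w₂ ⟨hw₂.1, le_rfl⟩)⟩
    exact absurd (le_csSup hbdd hw₂S) (not_le.2 hw₂.1)
  rw [hmx'] at hPm
  exact hPm
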